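/- Let (g⁺, g⁻) be a steady state of the space-homogeneous model with constant stock price s₀, i.e., Q_gain^h[g⁻] − Q_loss^h[g⁺] = 0 and Q_gain^h[g⁺] − Q_loss^h[g⁻] = 0. If g⁺ and g⁻ are nonnegative measures, then ∫ λ_h(m,s₀) g⁺(dm) = ∫ λ_h(m,s₀) g⁻(dm), and if moreover λ_h(s₀,s₀) = 0 then both g⁺ and g⁻ are supported in {m : λ_h(m,s₀) = 0}. -/

import Mathlib

open MeasureTheory

/-- If (g⁺, g⁻) is a weak steady state of the space-homogeneous model
with constant stock price s₀, i.e. for every continuous bounded test function φ,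
φ(s₀)∫λ_h dg⁻ − ∫φ λ_h dg⁺ = 0 and φ(s₀)∫λ_h dg⁺ − ∫φ λ_h dg⁻ = 0, then
∫λ_h dg⁺ = ∫λ_h dg⁻; if moreover λ_h(s₀) = 0 then g⁺ and g⁻ are supported in
{m : λ_h(m) = 0}. -/
theorem homogeneous_steady_state (s₀ : ℝ) (hs₀ : 0 < s₀)
    (lam : ℝ → ℝ) (hlamc : Continuous lam) (hlam0 : ∀ m, 0 ≤ lam m)
    (gp gm : Measure ℝ) [IsFiniteMeasure gp] [IsFiniteMeasure gm]
    (hsteady₁ : ∀ φ : ℝ → ℝ, Continuous φ → (∃ C, ∀ m, |φ m| ≤ C) →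
      φ s₀ * (∫ m, lam m ∂gm) - (∫ m, φ m * lam m ∂gp) = 0)
    (hsteady₂ : ∀ φ : ℝ → ℝ, Continuous φ → (∃ C, ∀ m, |φ m| ≤ C) →
      φ s₀ * (∫ m, lam m ∂gp) - (∫ m, φ m * lam m ∂gm) = 0) :
    (∫ m, lam m ∂gp) = (∫ m, lam m ∂gm) ∧
    (lam s₀ = 0 → gp {m | lam m ≠ 0} = 0 ∧ gm {m | lam m ≠ 0} = 0) := by
  constructor
  · have h := hsteady₂ (fun _ => 1) continuous_const ⟨1, fun m => by simp⟩
    simp only [one_mul] at h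
    linarith
  · intro h0
    set φ : ℝ → ℝ := fun m => lam m / (1 + lam m ^ 2) with hφ
    have hden : ∀ m : ℝ, 0 < 1 + lam m ^ 2 := fun m => by positivity
    have hφc : Continuous φ := hlamc.div (by continuity) fun m => (hden m).ne'
    have hφb : ∀ m, |φ m| ≤ 1 := by
      intro m
      rw [hφ]
      simp only
      rw [abs_div, abs_of_nonneg (hlam0 m), abs_of_pos (hden m),
        div_le_one (hden m)]
      nlinarith [hlam0 m]
    have hφs₀ : φ s₀ = 0 := by simp [hφ, h0]
    have key : ∀ (g : Measure ℝ), IsFiniteMeasure g →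
        (∫ m, φ m * lam m ∂g) = 0 → g {m | lam m ≠ 0} = 0 := by
      intro g hg hint
      have hf : ∀ m, φ m * lam m = lam m ^ 2 / (1 + lam m ^ 2) := by
        intro m; rw [hφ]; simp only; field_simp
      have hfc : Continuous (fun m => φ m * lam m) := hφc.mul hlamc
      have hnn : ∀ m, 0 ≤ φ m * lam m := by
        intro m; rw [hf]; positivity
      have hInt : Integrable (fun m => φ m * lam m) g := by
        apply Integrable.mono' (integrable_const (1 : ℝ)) hfc.aestronglyMeasurable
        filter_upwards with m
        rw [Real.norm_eq_abs, abs_of_nonneg (hnn m), hf m, div_le_one (hden m)]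
        nlinarith [hlam0 m]
      have hae := (integral_eq_zero_iff_of_nonneg hnn hInt).mp hint
      have hae' : ∀ᵐ m ∂g, lam m = 0 := by
        filter_upwards [hae] with m hm
        have hm' : lam m ^ 2 / (1 + lam m ^ 2) = 0 := by
          rw [← hf m]; exact hm
        field_simp at hm'
        simpa using hm'
      exact ae_iff.mp hae'
    constructor
    · have h := hsteady₁ φ hφc ⟨1, hφb⟩
      rw [hφs₀, zero_mul, zero_sub, neg_eq_zero] at h
      exact key gp inferInstance h
    · have h := hsteady₂ φ hφc ⟨1, hφb⟩
      rw [hφs₀, zero_mul, zero_sub, neg_eq_zero] at h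
      exact key gm inferInstance h
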